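/- arXiv:2302.06535 — 3 statements merged into one kernel-verified Lean document; each statement's English description precedes it below -/
import Mathlib

section
/- In the two-dimensional setting, fix θ ∈ (−π/2, π/2), β > 0, and τ > 0. Define, as functions of λ ≥ 1, R(τ) := β⁻¹ (e^{−τ} cos²θ + λ⁻¹ e^{−λτ} sin²θ) and R₁(τ) := β⁻¹ B⁻¹ e^{−τ B} with B = λ / (λ cos²θ + sin²θ). Then, as λ → +∞, |R(τ) − R₁(τ)| = β⁻¹ (e^{−τ} − e^{−τ sec²θ}) cos²θ + O(λ⁻¹); that is, the function λ ↦ |R(τ) − R₁(τ)| − β⁻¹ (e^{−τ} − e^{−τ sec²θ}) cos²θ is O(λ⁻¹) as λ → +∞. -/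
set_option maxHeartbeats 1000000


open Real Filter Asymptotics

lemma exp_neg_sub_exp_neg_le {x y : ℝ} (hx : 0 ≤ x) (hxy : x ≤ y) :
    Real.exp (-x) - Real.exp (-y) ≤ y - x := by
  have h1 : Real.exp (-y) = Real.exp (-x) * Real.exp (x - y) := by
    rw [← Real.exp_add]; ring_nf
  have h2 := Real.add_one_le_exp (x - y)
  have h3 : Real.exp (-x) ≤ 1 := Real.exp_le_one_iff.mpr (by linarith)
  have h4 : 0 < Real.exp (-x) := Real.exp_pos _
  have h5 : Real.exp (x - y) ≤ 1 := Real.exp_le_one_iff.mpr (by linarith)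
  nlinarith

/-- In the two-dimensional setting, for fixed `θ ∈ (-π/2, π/2)`, `β > 0`,
`τ > 0`, with `R(τ)(λ) = β⁻¹(e^{-τ} cos²θ + λ⁻¹ e^{-λτ} sin²θ)` and
`R₁(τ)(λ) = β⁻¹ B⁻¹ e^{-τB}`, `B = λ/(λ cos²θ + sin²θ)`, the absolute autocovariance
error of Approach 1 satisfies
`|R(τ) - R₁(τ)| = β⁻¹ (e^{-τ} - e^{-τ sec²θ}) cos²θ + O(λ⁻¹)` as `λ → +∞`. -/
theorem stmt_17 (θ β τ : ℝ) (hθ : θ ∈ Set.Ioo (-(π / 2)) (π / 2))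
    (hβ : 0 < β) (hτ : 0 < τ)
    (B : ℝ → ℝ) (hB : ∀ lam, B lam = lam / (lam * Real.cos θ ^ 2 + Real.sin θ ^ 2))
    (R R₁ : ℝ → ℝ)
    (hR : ∀ lam, R lam = β⁻¹ * (Real.exp (-τ) * Real.cos θ ^ 2
      + lam⁻¹ * Real.exp (-(lam * τ)) * Real.sin θ ^ 2))
    (hR₁ : ∀ lam, R₁ lam = β⁻¹ * (B lam)⁻¹ * Real.exp (-(τ * B lam))) :
    (fun lam => |R lam - R₁ lam|
        - β⁻¹ * (Real.exp (-τ) - Real.exp (-(τ / Real.cos θ ^ 2))) * Real.cos θ ^ 2)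
      =O[atTop] fun lam => lam⁻¹ := by
  obtain ⟨hθ1, hθ2⟩ := hθ
  have hcos : 0 < Real.cos θ := Real.cos_pos_of_mem_Ioo ⟨hθ1, hθ2⟩
  set c := Real.cos θ ^ 2 with hc_def
  set s := Real.sin θ ^ 2 with hs_def
  have hc : 0 < c := by positivity
  have hcs : c + s = 1 := by
    rw [hc_def, hs_def]; nlinarith [Real.sin_sq_add_cos_sq θ]
  have hs : 0 ≤ s := sq_nonneg _
  have hc1 : c ≤ 1 := by linarith
  set L := β⁻¹ * (Real.exp (-τ) - Real.exp (-(τ / c))) * c with hL_def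
  have hτc : τ ≤ τ / c := by
    rw [le_div_iff₀ hc]; nlinarith
  have hL : 0 ≤ L := by
    have : Real.exp (-(τ / c)) ≤ Real.exp (-τ) :=
      Real.exp_le_exp.mpr (by linarith)
    have hβi : 0 ≤ β⁻¹ := by positivity
    rw [hL_def]
    have : 0 ≤ Real.exp (-τ) - Real.exp (-(τ / c)) := by linarith
    positivity
  rw [isBigO_iff]
  refine ⟨β⁻¹ * (s + τ * s / c), ?_⟩
  filter_upwards [eventually_ge_atTop 1] with lam hlam
  have hlam0 : (0:ℝ) < lam := by linarith
  have hden : 0 < lam * c + s := by nlinarith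
  have hB0 : 0 ≤ B lam := by rw [hB lam]; positivity
  have hBle : B lam ≤ 1 / c := by
    rw [hB lam, div_le_div_iff₀ hden hc]
    nlinarith
  have hBinv : (B lam)⁻¹ = c + s * lam⁻¹ := by
    rw [hB lam]
    field_simp
  have hE2pos : 0 < Real.exp (-(lam * τ)) := Real.exp_pos _
  have hE3pos : 0 < Real.exp (-(τ * B lam)) := Real.exp_pos _
  have hE2le : Real.exp (-(lam * τ)) ≤ 1 := Real.exp_le_one_iff.mpr (by nlinarith)
  have hE3le : Real.exp (-(τ * B lam)) ≤ 1 := Real.exp_le_one_iff.mpr (by nlinarith)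
  have hτB : τ * B lam ≤ τ / c := by
    calc τ * B lam ≤ τ * (1/c) := by nlinarith
      _ = τ / c := by ring
  have hE43 : Real.exp (-(τ / c)) ≤ Real.exp (-(τ * B lam)) :=
    Real.exp_le_exp.mpr (by linarith)
  -- bound on E3 - E4
  have hdiff : τ / c - τ * B lam ≤ τ * s / (c * c) * lam⁻¹ := by
    have h5 : 1/c - B lam = s / (c * (lam * c + s)) := by
      rw [hB lam]; field_simp; ring
    have h6 : s / (c * (lam * c + s)) ≤ s / (c * c * lam) :=
      div_le_div_of_nonneg_left hs (by positivity) (by nlinarith)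
    have h8 : τ * s / (c * c) * lam⁻¹ = τ * (s / (c * c * lam)) := by
      field_simp
    have h9 : τ * (s / (c * (lam * c + s))) ≤ τ * (s / (c * c * lam)) :=
      mul_le_mul_of_nonneg_left h6 hτ.le
    have h10 : τ / c - τ * B lam = τ * (s / (c * (lam * c + s))) := by
      rw [← h5]; ring
    linarith [h8, h9, h10]
  have hE34 : Real.exp (-(τ * B lam)) - Real.exp (-(τ / c))
      ≤ τ * s / (c * c) * lam⁻¹ := by
    calc Real.exp (-(τ * B lam)) - Real.exp (-(τ / c)) ≤ τ / c - τ * B lam :=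
          exp_neg_sub_exp_neg_le (by positivity) hτB
      _ ≤ τ * s / (c * c) * lam⁻¹ := hdiff
  have key : R lam - R₁ lam - L
      = β⁻¹ * (s * lam⁻¹ * (Real.exp (-(lam * τ)) - Real.exp (-(τ * B lam)))
        + c * (Real.exp (-(τ / c)) - Real.exp (-(τ * B lam)))) := by
    rw [hR lam, hR₁ lam, hBinv, hL_def]
    ring
  have hlaminv : (0:ℝ) < lam⁻¹ := by positivity
  set E2 := Real.exp (-(lam * τ))
  set E3 := Real.exp (-(τ * B lam))
  set E4 := Real.exp (-(τ / c))
  have hmain : |R lam - R₁ lam - L| ≤ β⁻¹ * (s + τ * s / c) * lam⁻¹ := by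
    rw [key, abs_mul, abs_of_nonneg (by positivity : (0:ℝ) ≤ β⁻¹)]
    have h1 : |s * lam⁻¹ * (E2 - E3)| ≤ s * lam⁻¹ := by
      rw [abs_mul, abs_of_nonneg (by positivity : (0:ℝ) ≤ s * lam⁻¹)]
      have habs : |E2 - E3| ≤ 1 := abs_le.mpr ⟨by linarith, by linarith⟩
      nlinarith [abs_nonneg (E2 - E3), mul_nonneg hs hlaminv.le]
    have h2 : |c * (E4 - E3)| ≤ τ * s / c * lam⁻¹ := by
      rw [abs_mul, abs_of_nonneg hc.le, abs_of_nonpos (by linarith : E4 - E3 ≤ 0)]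
      have hmul : c * (E3 - E4) ≤ c * (τ * s / (c * c) * lam⁻¹) := by nlinarith
      calc c * -(E4 - E3) = c * (E3 - E4) := by ring
        _ ≤ c * (τ * s / (c * c) * lam⁻¹) := hmul
        _ = τ * s / c * lam⁻¹ := by field_simp
    calc β⁻¹ * |s * lam⁻¹ * (E2 - E3) + c * (E4 - E3)|
        ≤ β⁻¹ * (|s * lam⁻¹ * (E2 - E3)| + |c * (E4 - E3)|) := by
          gcongr
          exact abs_add_le _ _
      _ ≤ β⁻¹ * (s * lam⁻¹ + τ * s / c * lam⁻¹) := by gcongr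
      _ = β⁻¹ * (s + τ * s / c) * lam⁻¹ := by ring
  have step1 : ‖|R lam - R₁ lam| - L‖ ≤ |R lam - R₁ lam - L| := by
    rw [Real.norm_eq_abs]
    calc |(|R lam - R₁ lam|) - L| = |(|R lam - R₁ lam|) - (|L|)| := by
          rw [abs_of_nonneg hL]
      _ ≤ |R lam - R₁ lam - L| := abs_abs_sub_abs_le_abs_sub _ _
  calc ‖|R lam - R₁ lam| - L‖ ≤ |R lam - R₁ lam - L| := step1
    _ ≤ β⁻¹ * (s + τ * s / c) * lam⁻¹ := hmain
    _ = β⁻¹ * (s + τ * s / c) * ‖lam⁻¹‖ := by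
        rw [Real.norm_eq_abs, abs_of_pos hlaminv]
end

section
/- In the two-dimensional setting, fix θ ∈ (−π/2, π/2), β > 0, and τ > 0. With R(τ) := β⁻¹ (e^{−τ} cos²θ + λ⁻¹ e^{−λτ} sin²θ) and R₁(τ) := β⁻¹ B⁻¹ e^{−τB}, B = λ / (λ cos²θ + sin²θ), the relative autocovariance error satisfies, as λ → +∞, |R(τ) − R₁(τ)| / R(τ) = 1 − e^{−τ tan²θ} + O(λ⁻¹); that is, the function λ ↦ |R(τ) − R₁(τ)| / R(τ) − (1 − e^{−τ tan²θ}) is O(λ⁻¹) as λ → +∞. In particular, at τ = 1, |R(1) − R₁(1)| / R(1) = 1 − e^{−tan²θ} + O(λ⁻¹). -/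
open Real Filter Asymptotics Topology

set_option maxHeartbeats 1000000

lemma abs_exp_neg_sub (a b : ℝ) (ha : 0 ≤ a) (hb : 0 ≤ b) :
    |Real.exp (-a) - Real.exp (-b)| ≤ |a - b| := by
  wlog h : a ≤ b generalizing a b
  · rw [abs_sub_comm, abs_sub_comm a b]; exact this b a hb ha (le_of_not_ge h)
  have h1 : Real.exp (-b) = Real.exp (-a) * Real.exp (a - b) := by
    rw [← Real.exp_add]; ring_nf
  have h2 : (a - b) + 1 ≤ Real.exp (a - b) := Real.add_one_le_exp _
  have h3 : Real.exp (-a) ≤ 1 := Real.exp_le_one_iff.2 (by linarith)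
  have h4 : (0:ℝ) < Real.exp (-a) := Real.exp_pos _
  rw [abs_of_nonneg (sub_nonneg.2 (Real.exp_le_exp.2 (neg_le_neg h))),
    abs_of_nonpos (by linarith : a - b ≤ 0)]
  nlinarith

lemma key18 (θ β t : ℝ) (hθ : θ ∈ Set.Ioo (-(π / 2)) (π / 2))
    (hβ : 0 < β) (ht : 0 < t)
    (B : ℝ → ℝ) (hB : ∀ lam, B lam = lam / (lam * Real.cos θ ^ 2 + Real.sin θ ^ 2))
    (R R₁ : ℝ → ℝ → ℝ)
    (hR : ∀ t lam, R t lam = β⁻¹ * (Real.exp (-t) * Real.cos θ ^ 2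
      + lam⁻¹ * Real.exp (-(lam * t)) * Real.sin θ ^ 2))
    (hR₁ : ∀ t lam, R₁ t lam = β⁻¹ * (B lam)⁻¹ * Real.exp (-(t * B lam))) :
    (fun lam => |R t lam - R₁ t lam| / R t lam
        - (1 - Real.exp (-(t * Real.tan θ ^ 2))))
      =O[atTop] fun lam => lam⁻¹ := by
  have hcos : 0 < Real.cos θ := Real.cos_pos_of_mem_Ioo hθ
  set c : ℝ := Real.cos θ ^ 2 with hcdef
  set s : ℝ := Real.sin θ ^ 2 with hsdef
  have hc : 0 < c := by positivity
  have hcs : c + s = 1 := by rw [hcdef, hsdef, add_comm]; exact Real.sin_sq_add_cos_sq θ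
  have htan : Real.tan θ ^ 2 = s / c := by
    rw [Real.tan_eq_sin_div_cos, div_pow]
  by_cases hs0 : Real.sin θ = 0
  · -- degenerate case: everything eventually zero
    have hsz : s = 0 := by rw [hsdef, hs0]; ring
    have hc1 : c = 1 := by linarith
    have hzero : (fun lam => |R t lam - R₁ t lam| / R t lam
        - (1 - Real.exp (-(t * Real.tan θ ^ 2)))) =ᶠ[atTop] (fun _ => (0:ℝ)) := by
      filter_upwards [eventually_gt_atTop (0:ℝ)] with lam hlam
      have htanz : Real.tan θ = 0 := by rw [Real.tan_eq_sin_div_cos, hs0, zero_div]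
      have hBl : B lam = 1 := by
        rw [hB lam, hc1, hsz]
        simp [hlam.ne']
      have hRl : R t lam = β⁻¹ * Real.exp (-t) := by
        rw [hR t lam, hc1, hsz]; ring
      have hR₁l : R₁ t lam = β⁻¹ * Real.exp (-t) := by
        rw [hR₁ t lam, hBl]; norm_num
      simp [hRl, hR₁l, htanz]
    exact (Asymptotics.isBigO_zero _ _).congr' hzero.symm EventuallyEq.rfl
  have hs : 0 < s := by positivity
  have hc1 : c < 1 := by linarith
  -- abbreviations
  set E : ℝ := Real.exp (-(t * (s / c))) with hEdef
  set D : ℝ → ℝ := fun lam => Real.exp (-t) * c + lam⁻¹ * Real.exp (-(lam * t)) * s with hDdef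
  set N : ℝ → ℝ := fun lam => (c + s * lam⁻¹) * Real.exp (-(t * B lam)) with hNdef
  -- limits
  have h1 : Tendsto (fun lam : ℝ => lam⁻¹) atTop (𝓝 0) := tendsto_inv_atTop_zero
  have h2 : Tendsto (fun lam : ℝ => Real.exp (-(lam * t))) atTop (𝓝 0) := by
    have ha : Tendsto (fun lam : ℝ => lam * t) atTop atTop :=
      Tendsto.atTop_mul_const ht tendsto_id
    exact Real.tendsto_exp_atBot.comp (tendsto_neg_atTop_atBot.comp ha)
  have hD : Tendsto D atTop (𝓝 (Real.exp (-t) * c)) := by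
    have h3 : Tendsto (fun lam : ℝ => lam⁻¹ * Real.exp (-(lam * t)) * s) atTop (𝓝 0) := by
      simpa using (h1.mul h2).mul_const s
    have h4 : Tendsto (fun _ : ℝ => Real.exp (-t) * c) atTop (𝓝 (Real.exp (-t) * c)) :=
      tendsto_const_nhds
    simpa using h4.add h3
  have hq : Tendsto (fun lam : ℝ => c + s * lam⁻¹) atTop (𝓝 c) := by
    have h3 : Tendsto (fun lam : ℝ => s * lam⁻¹) atTop (𝓝 0) := by
      simpa using h1.const_mul s
    have h4 : Tendsto (fun _ : ℝ => c) atTop (𝓝 c) := tendsto_const_nhds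
    simpa using h4.add h3
  have hBt : Tendsto B atTop (𝓝 c⁻¹) := by
    refine (hq.inv₀ hc.ne').congr' ?_
    filter_upwards [eventually_gt_atTop (0:ℝ)] with lam hlam
    have hden : 0 < lam * c + s := by positivity
    rw [hB lam]
    field_simp
  have htB : Tendsto (fun lam => t * B lam) atTop (𝓝 (t / c)) := by
    have := hBt.const_mul t
    simpa [div_eq_mul_inv] using this
  have hN : Tendsto N atTop (𝓝 (c * Real.exp (-(t / c)))) :=
    hq.mul ((Real.continuous_exp.tendsto _).comp htB.neg)
  have hDN : Tendsto (fun lam => D lam - N lam)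
      atTop (𝓝 (Real.exp (-t) * c - c * Real.exp (-(t / c)))) := hD.sub hN
  have hlimpos : 0 < Real.exp (-t) * c - c * Real.exp (-(t / c)) := by
    have hlt : Real.exp (-(t / c)) < Real.exp (-t) := by
      apply Real.exp_lt_exp.2
      have : t < t / c := by
        rw [lt_div_iff₀ hc]; nlinarith
      linarith
    nlinarith
  have hev : ∀ᶠ lam in atTop, 0 < D lam - N lam :=
    hDN.eventually (eventually_gt_nhds hlimpos)
  rw [Asymptotics.isBigO_iff]
  refine ⟨(t * s / c + 2 * s) / (Real.exp (-t) * c), ?_⟩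
  filter_upwards [eventually_ge_atTop (1:ℝ), hev] with lam hlam1 hposDN
  have hlam0 : 0 < lam := lt_of_lt_of_le one_pos hlam1
  have hden : 0 < lam * c + s := by positivity
  have hBval : B lam = lam / (lam * c + s) := hB lam
  have hBnn : 0 ≤ t * B lam := by
    rw [hBval]; positivity
  have hBinv : (B lam)⁻¹ = c + s * lam⁻¹ := by
    rw [hBval, inv_div]
    field_simp
  have hRval : R t lam = β⁻¹ * D lam := by rw [hR t lam]
  have hR₁val : R₁ t lam = β⁻¹ * N lam := by
    rw [hR₁ t lam, hBinv, hNdef]; ring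
  have hDposlow : Real.exp (-t) * c ≤ D lam := by
    have : 0 ≤ lam⁻¹ * Real.exp (-(lam * t)) * s := by positivity
    simp only [hDdef]; linarith
  have hDpos : 0 < D lam := lt_of_lt_of_le (by positivity) hDposlow
  -- the exact expression
  have hfrac : |R t lam - R₁ t lam| / R t lam = (D lam - N lam) / D lam := by
    rw [hRval, hR₁val, ← mul_sub, abs_mul, abs_of_pos (inv_pos.2 hβ),
      abs_of_pos hposDN, mul_div_mul_left _ _ (ne_of_gt (inv_pos.2 hβ))]
  have hexpr : |R t lam - R₁ t lam| / R t lam - (1 - Real.exp (-(t * Real.tan θ ^ 2)))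
      = (E * D lam - N lam) / D lam := by
    rw [hfrac, htan, ← hEdef]
    field_simp
    ring
  rw [hexpr]
  -- bound the numerator
  set a1 : ℝ := Real.exp (-(t / c)) with ha1def
  set a2 : ℝ := Real.exp (-(t * B lam)) with ha2def
  set a3 : ℝ := Real.exp (-(lam * t)) with ha3def
  have hf1 : E * Real.exp (-t) = a1 := by
    rw [hEdef, ha1def, ← Real.exp_add]
    congr 1
    field_simp
    linear_combination -hcs
  have ha2le : a2 ≤ 1 := Real.exp_le_one_iff.2 (by linarith)
  have ha2pos : 0 < a2 := Real.exp_pos _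
  have ha3le : a3 ≤ 1 := Real.exp_le_one_iff.2 (by nlinarith)
  have ha3pos : 0 < a3 := Real.exp_pos _
  have hEle : E ≤ 1 := Real.exp_le_one_iff.2 (by
    have : 0 ≤ t * (s / c) := by positivity
    linarith)
  have hEpos : 0 < E := Real.exp_pos _
  have heq1 : t / c - t * B lam = t * s / (c * (lam * c + s)) := by
    rw [hBval]
    field_simp
    ring
  have habs : |a1 - a2| ≤ t * s / (c * (lam * c + s)) := by
    have h := abs_exp_neg_sub (t / c) (t * B lam) (by positivity) hBnn
    rw [← ha1def, ← ha2def] at h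
    refine h.trans ?_
    rw [heq1, abs_of_nonneg (by positivity)]
  have hK : c * |a1 - a2| ≤ t * s / c * lam⁻¹ := by
    have step1 : c * |a1 - a2| ≤ t * s / (lam * c + s) := by
      have := mul_le_mul_of_nonneg_left habs hc.le
      calc c * |a1 - a2| ≤ c * (t * s / (c * (lam * c + s))) := this
        _ = t * s / (lam * c + s) := by field_simp
    refine step1.trans ?_
    have hrhs : t * s / c * lam⁻¹ = t * s / (c * lam) := by
      field_simp
    rw [hrhs, div_le_div_iff₀ hden (by positivity : (0:ℝ) < c * lam)]
    nlinarith [mul_nonneg (mul_nonneg ht.le hs.le) hs.le]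
  have hsplit : E * D lam - N lam = c * (a1 - a2) + lam⁻¹ * s * (E * a3 - a2) := by
    simp only [hDdef, hNdef, ← ha2def, ← ha3def]
    rw [← hf1]
    ring
  have hmix : |E * a3 - a2| ≤ 1 := by
    rw [abs_le]
    constructor
    · nlinarith
    · nlinarith
  have hnum : |E * D lam - N lam| ≤ (t * s / c + 2 * s) * lam⁻¹ := by
    rw [hsplit]
    calc |c * (a1 - a2) + lam⁻¹ * s * (E * a3 - a2)|
        ≤ |c * (a1 - a2)| + |lam⁻¹ * s * (E * a3 - a2)| := abs_add_le _ _
      _ = c * |a1 - a2| + lam⁻¹ * s * |E * a3 - a2| := by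
          rw [abs_mul, abs_mul, abs_of_nonneg hc.le,
            abs_of_nonneg (by positivity : (0:ℝ) ≤ lam⁻¹ * s)]
      _ ≤ t * s / c * lam⁻¹ + lam⁻¹ * s * 1 := by
          refine add_le_add hK ?_
          exact mul_le_mul_of_nonneg_left hmix (by positivity)
      _ ≤ (t * s / c + 2 * s) * lam⁻¹ := by
          have h1 : 0 ≤ s * lam⁻¹ := by positivity
          nlinarith
  -- conclude
  have hnorm : ‖(E * D lam - N lam) / D lam‖ = |E * D lam - N lam| / D lam := by
    rw [Real.norm_eq_abs, abs_div, abs_of_pos hDpos]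
  rw [hnorm, Real.norm_eq_abs, abs_of_pos (inv_pos.2 hlam0)]
  calc |E * D lam - N lam| / D lam
      ≤ ((t * s / c + 2 * s) * lam⁻¹) / (Real.exp (-t) * c) := by
        apply div_le_div₀ (by positivity) hnum (by positivity) hDposlow
    _ = (t * s / c + 2 * s) / (Real.exp (-t) * c) * lam⁻¹ := by ring

/-- In the two-dimensional setting, for fixed `θ ∈ (-π/2, π/2)`, `β > 0`,
`τ > 0`, the relative autocovariance error of Approach 1 satisfies, as `λ → +∞`,
`|R(τ) - R₁(τ)| / R(τ) = 1 - e^{-τ tan²θ} + O(λ⁻¹)`; in particular at `τ = 1`,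
`|R(1) - R₁(1)| / R(1) = 1 - e^{-tan²θ} + O(λ⁻¹)`.
Here `R(τ)(λ) = β⁻¹(e^{-τ} cos²θ + λ⁻¹ e^{-λτ} sin²θ)`,
`R₁(τ)(λ) = β⁻¹ B⁻¹ e^{-τB}`, `B = λ/(λ cos²θ + sin²θ)`. -/
theorem stmt_18 (θ β τ : ℝ) (hθ : θ ∈ Set.Ioo (-(π / 2)) (π / 2))
    (hβ : 0 < β) (hτ : 0 < τ)
    (B : ℝ → ℝ) (hB : ∀ lam, B lam = lam / (lam * Real.cos θ ^ 2 + Real.sin θ ^ 2))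
    (R R₁ : ℝ → ℝ → ℝ)
    (hR : ∀ t lam, R t lam = β⁻¹ * (Real.exp (-t) * Real.cos θ ^ 2
      + lam⁻¹ * Real.exp (-(lam * t)) * Real.sin θ ^ 2))
    (hR₁ : ∀ t lam, R₁ t lam = β⁻¹ * (B lam)⁻¹ * Real.exp (-(t * B lam))) :
    ((fun lam => |R τ lam - R₁ τ lam| / R τ lam
        - (1 - Real.exp (-(τ * Real.tan θ ^ 2))))
      =O[atTop] fun lam => lam⁻¹) ∧
    ((fun lam => |R 1 lam - R₁ 1 lam| / R 1 lam
        - (1 - Real.exp (-(Real.tan θ ^ 2))))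
      =O[atTop] fun lam => lam⁻¹) := by
  refine ⟨key18 θ β τ hθ hβ hτ B hB R R₁ hR hR₁, ?_⟩
  have h := key18 θ β 1 hθ hβ one_pos B hB R R₁ hR hR₁
  simpa using h
end

section
/- In the two-dimensional setting, fix θ ∈ (−π/2, π/2), β > 0, and τ > 0. Define R(τ) := β⁻¹ (e^{−τ} cos²θ + λ⁻¹ e^{−λτ} sin²θ) and R₂(τ) := β⁻¹ B⁻¹ e^{−τ BC}, where B = λ / (λ cos²θ + sin²θ) and BC = (λ sin²θ + λ² cos²θ) / (sin²θ + λ² cos²θ). Then, as λ → +∞, |R(τ) − R₂(τ)| = β⁻¹ (sin²θ / λ) |e^{−λτ} − e^{−τ}(1 − τ)| + O(λ⁻²); that is, the function λ ↦ |R(τ) − R₂(τ)| − β⁻¹ (sin²θ / λ) |e^{−λτ} − e^{−τ}(1 − τ)| is O(λ⁻²) as λ → +∞. -/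
open Real Filter Asymptotics

set_option maxHeartbeats 1000000

/-- In the two-dimensional setting, for fixed `θ ∈ (-π/2, π/2)`, `β > 0`,
`τ > 0`, the absolute autocovariance error of Approach 2 satisfies, as `λ → +∞`,
`|R(τ) - R₂(τ)| = β⁻¹ (sin²θ/λ) |e^{-λτ} - e^{-τ}(1 - τ)| + O(λ⁻²)`.
Here `R(τ)(λ) = β⁻¹(e^{-τ} cos²θ + λ⁻¹ e^{-λτ} sin²θ)`,
`R₂(τ)(λ) = β⁻¹ B⁻¹ e^{-τ BC}` with `B = λ/(λ cos²θ + sin²θ)` and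
`BC = (λ sin²θ + λ² cos²θ)/(sin²θ + λ² cos²θ)`. -/
theorem stmt_19 (θ β τ : ℝ) (hθ : θ ∈ Set.Ioo (-(π / 2)) (π / 2))
    (hβ : 0 < β) (hτ : 0 < τ)
    (B : ℝ → ℝ) (hB : ∀ lam, B lam = lam / (lam * Real.cos θ ^ 2 + Real.sin θ ^ 2))
    (BC : ℝ → ℝ) (hBC : ∀ lam, BC lam = (lam * Real.sin θ ^ 2 + lam ^ 2 * Real.cos θ ^ 2)
      / (Real.sin θ ^ 2 + lam ^ 2 * Real.cos θ ^ 2))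
    (R R₂ : ℝ → ℝ)
    (hR : ∀ lam, R lam = β⁻¹ * (Real.exp (-τ) * Real.cos θ ^ 2
      + lam⁻¹ * Real.exp (-(lam * τ)) * Real.sin θ ^ 2))
    (hR₂ : ∀ lam, R₂ lam = β⁻¹ * (B lam)⁻¹ * Real.exp (-(τ * BC lam))) :
    (fun lam => |R lam - R₂ lam|
        - β⁻¹ * (Real.sin θ ^ 2 / lam)
          * |Real.exp (-(lam * τ)) - Real.exp (-τ) * (1 - τ)|)
      =O[atTop] fun lam => (lam ^ 2)⁻¹ := by
  have hcos : 0 < Real.cos θ := Real.cos_pos_of_mem_Ioo hθ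
  set c := Real.cos θ ^ 2 with hc_def
  set s := Real.sin θ ^ 2 with hs_def
  have hc : 0 < c := by positivity
  have hs : 0 ≤ s := sq_nonneg _
  have hcs : c + s = 1 := by
    rw [hc_def, hs_def, add_comm]; exact Real.sin_sq_add_cos_sq θ
  have hs1 : s ≤ 1 := by linarith
  have hc1 : c ≤ 1 := by linarith
  have hE : 0 < Real.exp (-τ) := Real.exp_pos _
  have hE1 : Real.exp (-τ) ≤ 1 := Real.exp_le_one_iff.mpr (by linarith)
  have hβi : 0 < β⁻¹ := by positivity
  rw [Asymptotics.isBigO_iff]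
  refine ⟨β⁻¹ * (3 * τ / c + τ ^ 2 / c ^ 2), ?_⟩
  filter_upwards [eventually_ge_atTop (1 : ℝ), eventually_ge_atTop (τ / c)] with L hL1 hLτ
  have hL0 : (0 : ℝ) < L := by linarith
  have hden : 0 < s + L ^ 2 * c := by positivity
  set u : ℝ := τ * (BC L - 1) with hu_def
  -- explicit formula for u
  have huval : u = τ * (s * (L - 1)) / (s + L ^ 2 * c) := by
    rw [hu_def, hBC]
    rw [div_sub_one (ne_of_gt hden)]
    rw [mul_div_assoc]
    congr 1
    ring
  have hu0 : 0 ≤ u := by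
    rw [huval]
    apply div_nonneg _ hden.le
    have h1 : 0 ≤ L - 1 := by linarith
    positivity
  have huL : u ≤ τ / (c * L) := by
    rw [huval, div_le_div_iff₀ hden (by positivity)]
    nlinarith [mul_pos hτ hden, mul_nonneg (mul_nonneg hτ.le hs) (mul_pos hc hL0).le,
      mul_nonneg (mul_nonneg hτ.le (by linarith : (0:ℝ) ≤ 1 - s))
        (mul_pos (mul_pos hc hL0) hL0).le]
  have hu1 : u ≤ 1 := by
    refine huL.trans ?_
    rw [div_le_one (by positivity)]
    have := (div_le_iff₀ hc).mp hLτ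
    linarith
  -- second-order bound on u - τs/(cL)
  have hquad : |u - τ * s / (c * L)| ≤ 2 * τ / (c ^ 2 * L ^ 2) := by
    have hval : u - τ * s / (c * L) = -(τ * s * (c * L + s)) / (c * L * (s + L ^ 2 * c)) := by
      rw [huval]
      field_simp
      ring
    rw [hval, abs_div, abs_neg]
    rw [abs_of_nonneg (by positivity), abs_of_nonneg (by positivity)]
    rw [div_le_div_iff₀ (by positivity) (by positivity)]
    have hsc : s * c ≤ 1 := by nlinarith
    have key : s * (c * L + s) * (c * L) ≤ 2 * (s + L ^ 2 * c) := by
      nlinarith [mul_nonneg (mul_nonneg (by linarith : (0:ℝ) ≤ 1 - s * c) hc.le) (sq_nonneg L),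
        mul_nonneg (mul_nonneg (by nlinarith : (0:ℝ) ≤ L - s ^ 2) hc.le) hL0.le]
    have hmul := mul_le_mul_of_nonneg_left key (by positivity : (0:ℝ) ≤ τ * (c * L))
    calc τ * s * (c * L + s) * (c ^ 2 * L ^ 2)
        = τ * (c * L) * (s * (c * L + s) * (c * L)) := by ring
      _ ≤ τ * (c * L) * (2 * (s + L ^ 2 * c)) := hmul
      _ = 2 * τ * (c * L * (s + L ^ 2 * c)) := by ring
  -- remainder of the exponential
  set r : ℝ := Real.exp (-u) - (1 - u) with hr_def
  have hrbound : |r| ≤ u ^ 2 := by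
    have h := Real.abs_exp_sub_one_sub_id_le (x := -u)
      (by rw [abs_of_nonpos (by linarith)]; linarith)
    have heq : Real.exp (-u) - 1 - (-u) = r := by rw [hr_def]; ring
    rw [heq] at h
    simpa [neg_sq] using h
  have hu2 : u ^ 2 ≤ τ ^ 2 / (c ^ 2 * L ^ 2) := by
    have hd : 0 ≤ τ / (c * L) := by positivity
    have h1 : u ^ 2 ≤ (τ / (c * L)) ^ 2 := sq_le_sq' (by linarith) huL
    calc u ^ 2 ≤ (τ / (c * L)) ^ 2 := h1
      _ = τ ^ 2 / (c ^ 2 * L ^ 2) := by rw [div_pow, mul_pow]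
  -- the key identity for the deviation
  set X : ℝ := Real.exp (-(L * τ)) - Real.exp (-τ) * (1 - τ) with hX_def
  set D : ℝ := R L - R₂ L - β⁻¹ * (s / L) * X with hD_def
  have hBinv : (B L)⁻¹ = c + s / L := by
    rw [hB, inv_div]
    field_simp
  have hexp : Real.exp (-(τ * BC L)) = Real.exp (-τ) * (1 - u + r) := by
    have h1 : -(τ * BC L) = -τ + -u := by rw [hu_def]; ring
    rw [h1, Real.exp_add, hr_def]
    ring
  have hDeq : D = β⁻¹ * Real.exp (-τ) *
      ((c + s / L) * u - s * τ / L - (c + s / L) * r) := by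
    rw [hD_def, hR, hR₂, hBinv, hexp, hX_def]
    ring
  -- bound |D|
  have hDbound : |D| ≤ β⁻¹ * (3 * τ / c + τ ^ 2 / c ^ 2) / L ^ 2 := by
    rw [hDeq]
    have hmulc : c * (u - τ * s / (c * L)) = c * u - s * τ / L := by
      field_simp
    have hsplit : (c + s / L) * u - s * τ / L - (c + s / L) * r
        = c * (u - τ * s / (c * L)) + (s / L) * u - (c + s / L) * r := by
      rw [hmulc]; ring
    rw [hsplit, abs_mul]
    have h1 : |c * (u - τ * s / (c * L)) + (s / L) * u - (c + s / L) * r|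
        ≤ c * |u - τ * s / (c * L)| + (s / L) * u + (c + s / L) * |r| := by
      calc |c * (u - τ * s / (c * L)) + (s / L) * u - (c + s / L) * r|
          = |c * (u - τ * s / (c * L)) + (s / L) * u + -((c + s / L) * r)| := by ring_nf
        _ ≤ |c * (u - τ * s / (c * L)) + (s / L) * u| + |-((c + s / L) * r)| := abs_add_le _ _
        _ ≤ |c * (u - τ * s / (c * L))| + |(s / L) * u| + |(c + s / L) * r| := by
            have h := abs_add_le (c * (u - τ * s / (c * L))) ((s / L) * u)
            rw [abs_neg]
            linarith
        _ = c * |u - τ * s / (c * L)| + (s / L) * u + (c + s / L) * |r| := by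
            have e1 : |c * (u - τ * s / (c * L))| = c * |u - τ * s / (c * L)| := by
              rw [abs_mul, abs_of_nonneg hc.le]
            have e2 : |(s / L) * u| = (s / L) * u :=
              abs_of_nonneg (mul_nonneg (by positivity) hu0)
            have e3 : |(c + s / L) * r| = (c + s / L) * |r| := by
              rw [abs_mul, abs_of_nonneg (by positivity : (0:ℝ) ≤ c + s / L)]
            rw [e1, e2, e3]
    have h2 : c * |u - τ * s / (c * L)| ≤ 2 * τ / (c * L ^ 2) := by
      calc c * |u - τ * s / (c * L)| ≤ c * (2 * τ / (c ^ 2 * L ^ 2)) :=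
            mul_le_mul_of_nonneg_left hquad hc.le
        _ = 2 * τ / (c * L ^ 2) := by field_simp
    have h3 : (s / L) * u ≤ τ / (c * L ^ 2) := by
      calc (s / L) * u ≤ (1 / L) * (τ / (c * L)) := by
            exact mul_le_mul ((div_le_div_iff_of_pos_right hL0).mpr hs1) huL hu0 (by positivity)
        _ = τ / (c * L ^ 2) := by
            rw [div_mul_div_comm, one_mul]
            congr 1
            ring
    have h4 : (c + s / L) * |r| ≤ τ ^ 2 / (c ^ 2 * L ^ 2) := by
      have hcl : c + s / L ≤ 1 := by
        have hss : s / L ≤ s := by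
          rw [div_le_iff₀ hL0]; nlinarith
        linarith
      calc (c + s / L) * |r| ≤ 1 * (τ ^ 2 / (c ^ 2 * L ^ 2)) := by
            apply mul_le_mul hcl (hrbound.trans hu2) (abs_nonneg _) one_pos.le
        _ = τ ^ 2 / (c ^ 2 * L ^ 2) := one_mul _
    have habsE : |β⁻¹ * Real.exp (-τ)| = β⁻¹ * Real.exp (-τ) := abs_of_nonneg (by positivity)
    rw [habsE]
    have hsum : |c * (u - τ * s / (c * L)) + (s / L) * u - (c + s / L) * r|
        ≤ (3 * τ / c + τ ^ 2 / c ^ 2) / L ^ 2 := by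
      have : 2 * τ / (c * L ^ 2) + τ / (c * L ^ 2) + τ ^ 2 / (c ^ 2 * L ^ 2)
          = (3 * τ / c + τ ^ 2 / c ^ 2) / L ^ 2 := by field_simp; ring
      linarith
    calc β⁻¹ * Real.exp (-τ) * |c * (u - τ * s / (c * L)) + (s / L) * u - (c + s / L) * r|
        ≤ β⁻¹ * 1 * ((3 * τ / c + τ ^ 2 / c ^ 2) / L ^ 2) := by
          apply mul_le_mul (by nlinarith) hsum (abs_nonneg _) (by positivity)
      _ = β⁻¹ * (3 * τ / c + τ ^ 2 / c ^ 2) / L ^ 2 := by ring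
  -- conclude
  have hcoef : 0 ≤ β⁻¹ * (s / L) := by positivity
  have htri : |(|R L - R₂ L| - β⁻¹ * (s / L) * |X|)| ≤ |D| := by
    have h1 : β⁻¹ * (s / L) * |X| = |β⁻¹ * (s / L) * X| := by
      rw [abs_mul, abs_of_nonneg hcoef]
    rw [h1]
    calc |(|R L - R₂ L| - |β⁻¹ * (s / L) * X|)|
        ≤ |R L - R₂ L - β⁻¹ * (s / L) * X| := abs_abs_sub_abs_le_abs_sub _ _
      _ = |D| := by rw [hD_def]
  have hnorm : ‖(L ^ 2)⁻¹‖ = (L ^ 2)⁻¹ := by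
    rw [Real.norm_eq_abs, abs_of_nonneg (by positivity)]
  rw [Real.norm_eq_abs, hnorm]
  calc |(|R L - R₂ L| - β⁻¹ * (s / L) * |X|)| ≤ |D| := htri
    _ ≤ β⁻¹ * (3 * τ / c + τ ^ 2 / c ^ 2) / L ^ 2 := hDbound
    _ = β⁻¹ * (3 * τ / c + τ ^ 2 / c ^ 2) * (L ^ 2)⁻¹ := by ring
end
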